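/- Let X be an m×s real matrix, σ > 0 with ‖X v‖ ≥ σ ‖v‖ for all v ∈ ℝˢ, and let Q̄ (m×s) and R̄ (s×s) satisfy R̄ᵀ R̄ = Xᵀ X + E and Q̄ R̄ = X + D with ‖E‖₂ < σ². Then ‖I_s − Q̄ᵀ Q̄‖₂ ≤ (‖E‖₂ + 2‖X‖₂‖D‖₂ + ‖D‖₂²) / (σ² − ‖E‖₂). -/

import Mathlib

open Matrix
open scoped Matrix.Norms.L2Operator

private lemma eu_normsq {n : ℕ} (w : Fin n → ℝ) :
    ‖(EuclideanSpace.equiv (Fin n) ℝ).symm w‖ ^ 2 = w ⬝ᵥ w := by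
  rw [EuclideanSpace.norm_eq, Real.sq_sqrt (by positivity)]
  simp [dotProduct, sq]

private lemma mulVec_dot {m n : ℕ} (A : Matrix (Fin m) (Fin n) ℝ) (v : Fin n → ℝ) (w : Fin m → ℝ) :
    (A *ᵥ v) ⬝ᵥ w = v ⬝ᵥ (Aᵀ *ᵥ w) := by
  rw [Matrix.dotProduct_mulVec, Matrix.vecMul_transpose, dotProduct_comm,
    Matrix.dotProduct_mulVec]

private lemma dot_le {n : ℕ} (v w : Fin n → ℝ) :
    |v ⬝ᵥ w| ≤ ‖(EuclideanSpace.equiv (Fin n) ℝ).symm v‖ * ‖(EuclideanSpace.equiv (Fin n) ℝ).symm w‖ := by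
  have := abs_real_inner_le_norm ((EuclideanSpace.equiv (Fin n) ℝ).symm v)
    ((EuclideanSpace.equiv (Fin n) ℝ).symm w)
  convert this using 2
  simp [EuclideanSpace.inner_eq_star_dotProduct, dotProduct_comm]

private lemma matL2_norm_le {m n : ℕ} (A : Matrix (Fin m) (Fin n) ℝ) {k : ℝ} (hk : 0 ≤ k)
    (h : ∀ v : EuclideanSpace ℝ (Fin n),
      ‖(EuclideanSpace.equiv (Fin m) ℝ).symm (A *ᵥ v)‖ ≤ k * ‖v‖) :
    ‖A‖ ≤ k := by
  rw [Matrix.l2_opNorm_def]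
  refine ContinuousLinearMap.opNorm_le_bound _ hk fun x => ?_
  simpa [Matrix.toEuclideanLin_apply] using h x

private lemma transpose_norm {m n : ℕ} (A : Matrix (Fin m) (Fin n) ℝ) : ‖Aᵀ‖ = ‖A‖ := by
  have : Aᵀ = Aᴴ := by ext i j; simp [Matrix.conjTranspose]
  rw [this, Matrix.l2_opNorm_conjTranspose]

/-- **Explicit-constant second-order loss-of-orthogonality bound (equation (4.7)).**
If `σ > 0` is a lower bound on the smallest singular value of `X`, `R̄ᵀ R̄ = Xᵀ X + E`,
`Q̄ R̄ = X + D`, and `‖E‖₂ < σ²`, then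
`‖I - Q̄ᵀ Q̄‖₂ ≤ (‖E‖₂ + 2 ‖X‖₂ ‖D‖₂ + ‖D‖₂²) / (σ² - ‖E‖₂)`. -/
theorem loss_of_orthogonality_explicit_bound (m s : ℕ)
    (X Qbar D : Matrix (Fin m) (Fin s) ℝ)
    (Rbar E : Matrix (Fin s) (Fin s) ℝ)
    (σ : ℝ) (hσ : 0 < σ)
    (hX : ∀ v : EuclideanSpace ℝ (Fin s),
      σ * ‖v‖ ≤ ‖(EuclideanSpace.equiv (Fin m) ℝ).symm (X *ᵥ v)‖)
    (hChol : Rbarᵀ * Rbar = Xᵀ * X + E)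
    (hQR : Qbar * Rbar = X + D)
    (hE : ‖E‖ < σ ^ 2) :
    ‖1 - Qbarᵀ * Qbar‖ ≤ (‖E‖ + 2 * ‖X‖ * ‖D‖ + ‖D‖ ^ 2) / (σ ^ 2 - ‖E‖) := by
  classical
  have hc : (0:ℝ) < σ ^ 2 - ‖E‖ := by linarith
  set c : ℝ := σ ^ 2 - ‖E‖ with hcdef
  -- quadratic lower bound for Rbar, stated for plain vectors
  have key : ∀ v : Fin s → ℝ,
      c * ‖(EuclideanSpace.equiv (Fin s) ℝ).symm v‖ ^ 2
        ≤ ‖(EuclideanSpace.equiv (Fin s) ℝ).symm (Rbar *ᵥ v)‖ ^ 2 := by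
    intro v
    have h1 : ‖(EuclideanSpace.equiv (Fin s) ℝ).symm (Rbar *ᵥ v)‖ ^ 2
        = ‖(EuclideanSpace.equiv (Fin m) ℝ).symm (X *ᵥ v)‖ ^ 2 + v ⬝ᵥ (E *ᵥ v) := by
      rw [eu_normsq, eu_normsq, mulVec_dot, Matrix.mulVec_mulVec, hChol, Matrix.add_mulVec,
        dotProduct_add, ← Matrix.mulVec_mulVec, ← mulVec_dot]
    have h2 : σ ^ 2 * ‖(EuclideanSpace.equiv (Fin s) ℝ).symm v‖ ^ 2
        ≤ ‖(EuclideanSpace.equiv (Fin m) ℝ).symm (X *ᵥ v)‖ ^ 2 := by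
      have hx : σ * ‖(EuclideanSpace.equiv (Fin s) ℝ).symm v‖
          ≤ ‖(EuclideanSpace.equiv (Fin m) ℝ).symm (X *ᵥ v)‖ := hX ((EuclideanSpace.equiv (Fin s) ℝ).symm v)
      have h0 : 0 ≤ σ * ‖(EuclideanSpace.equiv (Fin s) ℝ).symm v‖ := by positivity
      nlinarith [norm_nonneg ((EuclideanSpace.equiv (Fin m) ℝ).symm (X *ᵥ v)),
        norm_nonneg ((EuclideanSpace.equiv (Fin s) ℝ).symm v)]
    have h3 : |v ⬝ᵥ (E *ᵥ v)| ≤ ‖E‖ * ‖(EuclideanSpace.equiv (Fin s) ℝ).symm v‖ ^ 2 := by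
      have h5 := dot_le v (E *ᵥ v)
      have h4 : ‖(EuclideanSpace.equiv (Fin s) ℝ).symm (E *ᵥ v)‖
          ≤ ‖E‖ * ‖(EuclideanSpace.equiv (Fin s) ℝ).symm v‖ := Matrix.l2_opNorm_mulVec E ((EuclideanSpace.equiv (Fin s) ℝ).symm v)
      have hEn : (0:ℝ) ≤ ‖E‖ := norm_nonneg _
      nlinarith [norm_nonneg ((EuclideanSpace.equiv (Fin s) ℝ).symm v),
        norm_nonneg ((EuclideanSpace.equiv (Fin s) ℝ).symm (E *ᵥ v))]
    have := abs_le.mp h3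
    rw [h1]; nlinarith
  -- Rbar invertible
  have hdet : IsUnit Rbar.det := by
    by_contra hd
    have hd0 : Rbar.det = 0 := by simpa [isUnit_iff_ne_zero] using hd
    obtain ⟨v, hv0, hv⟩ := (Matrix.exists_mulVec_eq_zero_iff).mpr hd0
    have hkey := key v
    rw [hv] at hkey
    have hvnorm : (0:ℝ) < ‖(EuclideanSpace.equiv (Fin s) ℝ).symm v‖ := by
      simpa [norm_pos_iff] using hv0
    simp only [map_zero, norm_zero] at hkey
    nlinarith [mul_pos hc (pow_pos hvnorm 2)]
  have hmulinv : Rbar * Rbar⁻¹ = 1 := Matrix.mul_nonsing_inv _ hdet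
  -- bound on ‖Rbar⁻¹‖
  set k : ℝ := Real.sqrt c⁻¹ with hk
  have hkpos : 0 ≤ k := Real.sqrt_nonneg _
  have hk2 : k ^ 2 = c⁻¹ := Real.sq_sqrt (by positivity)
  have hinvnorm : ‖Rbar⁻¹‖ ≤ k := by
    refine matL2_norm_le _ hkpos fun w => ?_
    have hR : Rbar *ᵥ (Rbar⁻¹ *ᵥ (w : Fin s → ℝ)) = (w : Fin s → ℝ) := by
      rw [Matrix.mulVec_mulVec, hmulinv, Matrix.one_mulVec]
    have hkey := key (Rbar⁻¹ *ᵥ (w : Fin s → ℝ))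
    rw [hR] at hkey
    have hw : ((EuclideanSpace.equiv (Fin s) ℝ).symm (w : Fin s → ℝ)) = w := rfl
    rw [hw] at hkey
    have hsq : ‖(EuclideanSpace.equiv (Fin s) ℝ).symm (Rbar⁻¹ *ᵥ (w : Fin s → ℝ))‖ ^ 2
        ≤ (k * ‖w‖) ^ 2 := by
      have : (k * ‖w‖) ^ 2 = c⁻¹ * ‖w‖ ^ 2 := by rw [mul_pow, hk2]
      rw [this]
      exact (le_inv_mul_iff₀ hc).mpr hkey
    have h0 : 0 ≤ ‖(EuclideanSpace.equiv (Fin s) ℝ).symm (Rbar⁻¹ *ᵥ (w : Fin s → ℝ))‖ :=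
      norm_nonneg _
    have hkw : 0 ≤ k * ‖w‖ := by positivity
    nlinarith
  -- the sandwich identity
  set M : Matrix (Fin s) (Fin s) ℝ := 1 - Qbarᵀ * Qbar with hM
  have hS : Rbarᵀ * M * Rbar = E - Xᵀ * D - Dᵀ * X - Dᵀ * D := by
    have e1 : Rbarᵀ * M * Rbar = Rbarᵀ * Rbar - (Qbar * Rbar)ᵀ * (Qbar * Rbar) := by
      simp only [hM, Matrix.transpose_mul, Matrix.mul_sub, Matrix.sub_mul, Matrix.mul_one,
        Matrix.one_mul, Matrix.mul_assoc]
    rw [e1, hChol, hQR, Matrix.transpose_add, Matrix.add_mul, Matrix.mul_add, Matrix.mul_add]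
    abel
  have hMid : M = Rbar⁻¹ᵀ * (Rbarᵀ * M * Rbar) * Rbar⁻¹ := by
    rw [Matrix.transpose_nonsing_inv]
    have h1 : Rbarᵀ⁻¹ * (Rbarᵀ * M * Rbar) * Rbar⁻¹
        = (Rbarᵀ⁻¹ * Rbarᵀ) * M * (Rbar * Rbar⁻¹) := by
      simp only [Matrix.mul_assoc]
    rw [h1, hmulinv, Matrix.nonsing_inv_mul _ (by simpa using hdet), Matrix.one_mul,
      Matrix.mul_one]
  set N : ℝ := ‖E‖ + 2 * ‖X‖ * ‖D‖ + ‖D‖ ^ 2 with hNdef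
  have hSnorm : ‖E - Xᵀ * D - Dᵀ * X - Dᵀ * D‖ ≤ N := by
    have n1 : ‖Xᵀ * D‖ ≤ ‖X‖ * ‖D‖ := le_trans (Matrix.l2_opNorm_mul _ _) (by rw [transpose_norm])
    have n2 : ‖Dᵀ * X‖ ≤ ‖D‖ * ‖X‖ := le_trans (Matrix.l2_opNorm_mul _ _) (by rw [transpose_norm])
    have n3 : ‖Dᵀ * D‖ ≤ ‖D‖ * ‖D‖ := le_trans (Matrix.l2_opNorm_mul _ _) (by rw [transpose_norm])
    calc ‖E - Xᵀ * D - Dᵀ * X - Dᵀ * D‖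
        ≤ ‖E - Xᵀ * D - Dᵀ * X‖ + ‖Dᵀ * D‖ := norm_sub_le _ _
      _ ≤ ‖E - Xᵀ * D‖ + ‖Dᵀ * X‖ + ‖Dᵀ * D‖ := by linarith [norm_sub_le (E - Xᵀ * D) (Dᵀ * X)]
      _ ≤ ‖E‖ + ‖Xᵀ * D‖ + ‖Dᵀ * X‖ + ‖Dᵀ * D‖ := by linarith [norm_sub_le E (Xᵀ * D)]
      _ ≤ N := by rw [hNdef]; nlinarith
  have hN : (0:ℝ) ≤ N := le_trans (norm_nonneg _) hSnorm
  have final : ‖M‖ ≤ N * k ^ 2 := by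
    calc ‖M‖ = ‖Rbar⁻¹ᵀ * (Rbarᵀ * M * Rbar) * Rbar⁻¹‖ := by rw [← hMid]
      _ ≤ ‖Rbar⁻¹ᵀ * (Rbarᵀ * M * Rbar)‖ * ‖Rbar⁻¹‖ := Matrix.l2_opNorm_mul _ _
      _ ≤ ‖Rbar⁻¹ᵀ‖ * ‖Rbarᵀ * M * Rbar‖ * ‖Rbar⁻¹‖ :=
          mul_le_mul_of_nonneg_right (Matrix.l2_opNorm_mul _ _) (norm_nonneg _)
      _ ≤ k * N * k := by
          rw [transpose_norm, hS]
          have g1 : ‖Rbar⁻¹‖ * ‖E - Xᵀ * D - Dᵀ * X - Dᵀ * D‖ ≤ k * N :=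
            mul_le_mul hinvnorm hSnorm (norm_nonneg _) hkpos
          exact mul_le_mul g1 hinvnorm (norm_nonneg _) (mul_nonneg hkpos hN)
      _ = N * k ^ 2 := by ring
  have hkk : N * k ^ 2 = N / c := by rw [hk2]; field_simp
  rw [hkk] at final
  exact final
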